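/- arXiv:2011.05772 — 2 statements merged into one kernel-verified Lean document; each statement's English description precedes it below -/
import Mathlib

section
/- For every vertex v of G and the copy v in 𝒢(v0) (first copy), the distance from v0 to v in 𝒢(v0) equals the distance from v0 to v in G. -/
open SimpleGraph Sum

variable {V : Type*}

/-- The bipartite double construction `𝒢(v0)` of `G` with respect to `v0`: two copies of `V`;
every non-cross edge of `G` is kept inside each copy, and every cross edge `{u,w}`
(i.e. `d(v0,u) = d(v0,w)`) is replaced by the two edges `{u,w′}` and `{u′,w}` between the copies. -/
def doubleCover (G : SimpleGraph V) (v0 : V) : SimpleGraph (V ⊕ V) where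
  Adj x y :=
    match x, y with
    | inl u, inl w => G.Adj u w ∧ G.dist v0 u ≠ G.dist v0 w
    | inr u, inr w => G.Adj u w ∧ G.dist v0 u ≠ G.dist v0 w
    | inl u, inr w => G.Adj u w ∧ G.dist v0 u = G.dist v0 w
    | inr u, inl w => G.Adj u w ∧ G.dist v0 u = G.dist v0 w
  symm := by
    constructor
    rintro (u|u) (w|w) ⟨h1, h2⟩ <;> exact ⟨h1.symm, by omega⟩
  loopless := by
    constructor
    rintro (u|u) ⟨h, _⟩ <;> exact G.irrefl h

/-- Projection homomorphism from the double cover to `G`. -/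
def doubleCoverHom (G : SimpleGraph V) (v0 : V) : doubleCover G v0 →g G where
  toFun := Sum.elim id id
  map_rel' := by
    rintro (u|u) (w|w) ⟨h, _⟩ <;> exact h

/-- Shortest paths in `G` from `v0` lift to the first copy. -/
lemma doubleCover_lift (G : SimpleGraph V) (hG : G.Connected) (v0 : V) :
    ∀ n v, G.dist v0 v = n →
      ∃ q : (doubleCover G v0).Walk (inl v0) (inl v), q.length = n := by
  intro n
  induction n with
  | zero =>
    intro v h
    obtain rfl : v0 = v := (hG.dist_eq_zero_iff).mp h
    exact ⟨.nil, rfl⟩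
  | succ n ih =>
    intro v h
    obtain ⟨p, hp⟩ := (hG v0 v).exists_walk_length_eq_dist
    cases hpr : p.reverse with
    | nil =>
      have := congrArg SimpleGraph.Walk.length hpr
      simp [hp, h] at this
      simp [SimpleGraph.dist_self] at h
    | @cons _ u _ huv q =>
      have hlen : q.length = n := by
        have := congrArg SimpleGraph.Walk.length hpr
        simp [hp, h] at this
        omega
      have hle : G.dist v0 u ≤ n := by
        have := G.dist_le q.reverse
        simpa [hlen] using this
      have hge : n + 1 ≤ G.dist v0 u + 1 := by
        calc n + 1 = G.dist v0 v := h.symm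
          _ ≤ G.dist v0 u + G.dist u v := hG.dist_triangle
          _ ≤ G.dist v0 u + 1 := by
              have : G.dist u v ≤ 1 := by simpa using G.dist_le huv.symm.toWalk
              omega
      have hd : G.dist v0 u = n := by omega
      obtain ⟨q', hq'⟩ := ih u hd
      refine ⟨q'.concat (show (doubleCover G v0).Adj (inl u) (inl v) from ⟨huv.symm, by rw [hd, h]; omega⟩), ?_⟩
      simp [SimpleGraph.Walk.length_concat, hq']

/-- The distance from `v0` to the first copy of any vertex `v` in `𝒢(v0)` equals the
distance from `v0` to `v` in `G`. -/
theorem doubleCover_dist_first_copy [Fintype V] (G : SimpleGraph V) (hG : G.Connected)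
    (v0 v : V) :
    (doubleCover G v0).dist (inl v0) (inl v) = G.dist v0 v := by
  obtain ⟨q, hq⟩ := doubleCover_lift G hG v0 (G.dist v0 v) v rfl
  have h1 : (doubleCover G v0).dist (inl v0) (inl v) ≤ G.dist v0 v := by
    simpa [hq] using (doubleCover G v0).dist_le q
  have h2 : G.dist v0 v ≤ (doubleCover G v0).dist (inl v0) (inl v) := by
    have hr : (doubleCover G v0).Reachable (inl v0) (inl v) := ⟨q⟩
    obtain ⟨w, hw⟩ := hr.exists_walk_length_eq_dist
    have := G.dist_le (w.map (doubleCoverHom G v0))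
    rw [SimpleGraph.Walk.length_map, hw] at this; exact this
  omega
end

section
/- For a finite connected non-bipartite graph G and any vertex v0, the bipartite double construction 𝒢(v0) (cross edges w.r.t. v0 rerouted between the two copies) is connected. -/
open SimpleGraph Sum

variable {V : Type*}

private lemma adj_dist_le {G : SimpleGraph V} (hG : G.Connected) (v0 : V) {u w : V}
    (h : G.Adj u w) : G.dist v0 w ≤ G.dist v0 u + 1 := by
  have := hG.dist_triangle (u := v0) (v := u) (w := w)
  rwa [dist_eq_one_iff_adj.mpr h] at this

private lemma exists_adj_dist_pred {G : SimpleGraph V} (hG : G.Connected) {v0 u : V} {n : ℕ}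
    (h : G.dist v0 u = n + 1) : ∃ w, G.Adj w u ∧ G.dist v0 w = n := by
  obtain ⟨p, hp⟩ := (hG u v0).exists_walk_length_eq_dist
  rw [SimpleGraph.dist_comm (G := G) (u := v0) (v := u)] at h
  cases p with
  | nil => simp at h
  | cons hadj q =>
    rename_i w
    refine ⟨w, hadj.symm, ?_⟩
    have h1 : G.dist v0 w ≤ n := by
      have := dist_le q
      rw [SimpleGraph.dist_comm (G := G)]
      simp only [Walk.length_cons] at hp
      omega
    have h2 : G.dist v0 u ≤ G.dist v0 w + 1 := adj_dist_le hG v0 hadj.symm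
    rw [SimpleGraph.dist_comm (G := G) (u := u) (v := v0)] at h
    omega

private lemma reach_lift {G : SimpleGraph V} (hG : G.Connected) (v0 : V) :
    ∀ n u, G.dist v0 u = n →
      (doubleCover G v0).Reachable (inl v0) (inl u) ∧
      (doubleCover G v0).Reachable (inr v0) (inr u) := by
  intro n
  induction n with
  | zero =>
    intro u hu
    have : v0 = u := hG.dist_eq_zero_iff.mp hu
    subst this
    exact ⟨Reachable.refl _, Reachable.refl _⟩
  | succ n ih =>
    intro u hu
    obtain ⟨w, hadj, hw⟩ := exists_adj_dist_pred hG hu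
    have hne : G.dist v0 w ≠ G.dist v0 u := by omega
    obtain ⟨r1, r2⟩ := ih w hw
    exact ⟨r1.trans (SimpleGraph.Adj.reachable (show (doubleCover G v0).Adj (inl w) (inl u) from
      ⟨hadj, hne⟩)), r2.trans (SimpleGraph.Adj.reachable (show (doubleCover G v0).Adj (inr w) (inr u)
      from ⟨hadj, hne⟩))⟩

/-- For a finite connected non-bipartite graph `G` and any vertex `v0`, the bipartite
double construction `𝒢(v0)` is connected. -/
theorem doubleCover_connected_of_not_bipartite [Fintype V] (G : SimpleGraph V)
    (hG : G.Connected) (hnb : ¬ G.Colorable 2) (v0 : V) :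
    (doubleCover G v0).Connected := by
  -- there exists a cross edge
  have hcross : ∃ u w, G.Adj u w ∧ G.dist v0 u = G.dist v0 w := by
    by_contra hc
    push_neg at hc
    apply hnb
    refine ⟨⟨fun u => ⟨G.dist v0 u % 2, by omega⟩, ?_⟩⟩
    intro u w hadj
    have h1 := hc u w hadj
    have h2 := adj_dist_le hG v0 hadj
    have h3 := adj_dist_le hG v0 hadj.symm
    simp only [Fin.mk.injEq, ne_eq, top_adj]
    omega
  obtain ⟨u, w, hadj, hdist⟩ := hcross
  have h1 := (reach_lift hG v0 _ u rfl).1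
  have h2 := (reach_lift hG v0 _ w rfl).2
  have hbridge : (doubleCover G v0).Reachable (inl v0) (inr v0) :=
    (h1.trans (SimpleGraph.Adj.reachable (show (doubleCover G v0).Adj (inl u) (inr w) from
      ⟨hadj, hdist⟩))).trans h2.symm
  have key : ∀ x : V ⊕ V, (doubleCover G v0).Reachable (inl v0) x := by
    rintro (a | a)
    · exact (reach_lift hG v0 _ a rfl).1
    · exact hbridge.trans (reach_lift hG v0 _ a rfl).2
  have : Nonempty (V ⊕ V) := ⟨inl v0⟩
  exact Connected.mk (fun x y => (key x).symm.trans (key y))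
end
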